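/- If a matroid M on ground set E is representable over a finite field F, then M is |F|-entropic: there exists a probability distribution μ on F^E such that for every subset S of E, the rank of S in M equals the Shannon entropy (in base |F|) of the marginal of μ on S. -/

import Mathlib

open scoped Classical BigOperators

/-- Shannon entropy in base `q` of a probability mass function on a finite type. -/
noncomputable def shannonEntropy {α : Type*} [Fintype α] (q : ℝ) (μ : PMF α) : ℝ :=
  -∑ x : α, (μ x).toReal * Real.logb q (μ x).toReal

/-- Marginal of a distribution on `ι → α` on the coordinates in `S`. -/
noncomputable def marg {ι α : Type*} (μ : PMF (ι → α)) (S : Finset ι) :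
    PMF ({ i // i ∈ S } → α) :=
  μ.map fun x i => x i.1

open scoped ENNReal

/-- Entropy of a PMF that is uniform on its support of size `m`. -/
lemma entropy_of_two_valued {α : Type*} [Fintype α] (q : ℝ) (μ : PMF α) (m : ℕ) (hm : 0 < m)
    (h : ∀ x, μ x = 0 ∨ μ x = (m : ℝ≥0∞)⁻¹) :
    shannonEntropy q μ = Real.logb q m := by
  classical
  set T : Finset α := Finset.univ.filter (fun x => μ x ≠ 0) with hT
  have hmem : ∀ x ∈ T, μ x = (m : ℝ≥0∞)⁻¹ := by
    intro x hx
    rcases h x with h0 | h1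
    · simp [hT, h0] at hx
    · exact h1
  have hm0 : (m : ℝ≥0∞) ≠ 0 := Nat.cast_ne_zero.mpr hm.ne'
  have hsum : ∑ x : α, μ x = 1 := by rw [← μ.tsum_coe, tsum_fintype]
  have hsumT : ∑ x ∈ T, μ x = 1 := by
    rw [← hsum]
    refine Finset.sum_subset (Finset.subset_univ T) ?_
    intro x _ hx
    by_contra hne
    exact hx (by simp [hT, hne])
  have hcardT : (T.card : ℝ≥0∞) * (m : ℝ≥0∞)⁻¹ = 1 := by
    rw [← hsumT, Finset.sum_congr rfl hmem, Finset.sum_const, nsmul_eq_mul]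
  have hcard : T.card = m := by
    have : (T.card : ℝ≥0∞) = m := by
      have := congrArg (· * (m : ℝ≥0∞)) hcardT
      simpa [mul_assoc, ENNReal.inv_mul_cancel hm0 (ENNReal.natCast_ne_top m)] using this
    exact_mod_cast this
  have hmtoReal : ((m : ℝ≥0∞)⁻¹).toReal = (m : ℝ)⁻¹ := by
    rw [ENNReal.toReal_inv]; simp
  unfold shannonEntropy
  have hterm : ∀ x : α, (μ x).toReal * Real.logb q (μ x).toReal
      = if x ∈ T then (m : ℝ)⁻¹ * Real.logb q ((m : ℝ)⁻¹) else 0 := by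
    intro x
    by_cases hx : x ∈ T
    · rw [if_pos hx, hmem x hx, hmtoReal]
    · have : μ x = 0 := by
        by_contra hne
        exact hx (by simp [hT, hne])
      rw [if_neg hx, this]; simp
  rw [Finset.sum_congr rfl (fun x _ => hterm x), Finset.sum_ite_mem, Finset.univ_inter,
    Finset.sum_const, hcard, nsmul_eq_mul]
  have hmR : (m : ℝ) ≠ 0 := Nat.cast_ne_zero.mpr hm.ne'
  rw [Real.logb_inv]
  field_simp

/-- Entropy of the pushforward of the uniform distribution along a linear map
over a finite field equals the rank of the map. -/
lemma entropy_map_uniform {F : Type*} [Field F] [Fintype F] {D W : Type*}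
    [AddCommGroup D] [Module F D] [Fintype D]
    [AddCommGroup W] [Module F W] [Fintype W]
    (L : D →ₗ[F] W) :
    shannonEntropy (Fintype.card F) (PMF.map ⇑L (PMF.uniformOfFintype D)) =
      Module.finrank F (LinearMap.range L) := by
  classical
  haveI : Nonempty D := ⟨0⟩
  haveI : FiniteDimensional F D := Module.Finite.of_finite
  haveI : FiniteDimensional F W := Module.Finite.of_finite
  set q := Fintype.card F with hq
  have hq1 : 1 < q := Fintype.one_lt_card
  set cr := Fintype.card (LinearMap.range L) with hcr
  set ck := Fintype.card (LinearMap.ker L) with hck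
  have hcrpow : cr = q ^ Module.finrank F (LinearMap.range L) := Module.card_eq_pow_finrank
  have hckpow : ck = q ^ Module.finrank F (LinearMap.ker L) := Module.card_eq_pow_finrank
  have hq0 : 0 < q := lt_trans Nat.zero_lt_one hq1
  have hcrpos : 0 < cr := hcrpow ▸ pow_pos hq0 _
  have hckpos : 0 < ck := hckpow ▸ pow_pos hq0 _
  have hcr0 : (cr : ℝ≥0∞) ≠ 0 := Nat.cast_ne_zero.mpr hcrpos.ne'
  have hck0 : (ck : ℝ≥0∞) ≠ 0 := Nat.cast_ne_zero.mpr hckpos.ne'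
  have hD : Fintype.card D = cr * ck := by
    rw [hcrpow, hckpow, ← pow_add, LinearMap.finrank_range_add_finrank_ker,
      Module.card_eq_pow_finrank (K := F)]
  -- cardinality of fibres
  have hfiber : ∀ y : W, y ∈ LinearMap.range L →
      Fintype.card {x : D // y = L x} = ck := by
    intro y hy
    obtain ⟨x₀, hx₀⟩ := hy
    exact Fintype.card_congr
      { toFun := fun x => ⟨x.1 - x₀, by
          rw [LinearMap.mem_ker, map_sub, hx₀, ← x.2, sub_self]⟩
        invFun := fun k => ⟨x₀ + k.1, by
          have hk := k.2
          rw [LinearMap.mem_ker] at hk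
          rw [map_add, hk, add_zero, hx₀]⟩
        left_inv := fun x => by ext; simp
        right_inv := fun k => by ext; simp }
  -- value of the pushforward PMF
  have hval : ∀ y : W, (PMF.map ⇑L (PMF.uniformOfFintype D)) y
      = (Fintype.card {x : D // y = L x} : ℝ≥0∞) * (Fintype.card D : ℝ≥0∞)⁻¹ := by
    intro y
    rw [PMF.map_apply, tsum_fintype]
    simp only [PMF.uniformOfFintype_apply]
    rw [← Finset.sum_filter, Finset.sum_const, nsmul_eq_mul, Fintype.card_subtype]
  have htwo : ∀ y : W, (PMF.map ⇑L (PMF.uniformOfFintype D)) y = 0 ∨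
      (PMF.map ⇑L (PMF.uniformOfFintype D)) y = ((cr : ℕ) : ℝ≥0∞)⁻¹ := by
    intro y
    by_cases hy : y ∈ LinearMap.range L
    · right
      rw [hval y, hfiber y hy, hD]
      push_cast
      rw [ENNReal.mul_inv (Or.inl hcr0) (Or.inl (ENNReal.natCast_ne_top cr)),
        ← mul_assoc, mul_comm (ck : ℝ≥0∞), mul_assoc,
        ENNReal.mul_inv_cancel hck0 (ENNReal.natCast_ne_top ck), mul_one]
    · left
      rw [hval y]
      have : IsEmpty {x : D // y = L x} := by
        refine ⟨fun x => hy ⟨x.1, x.2.symm⟩⟩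
      rw [Fintype.card_eq_zero]
      simp
  rw [entropy_of_two_valued _ _ cr hcrpos htwo, hcrpow]
  push_cast
  have hq1R : (1 : ℝ) < q := by exact_mod_cast hq1
  rw [Real.logb_pow, Real.logb_self_eq_one hq1R, mul_one]

/-- The rank of the joint evaluation map on the dual space equals the dimension of
the span of the vectors being evaluated. -/
lemma rank_eval {F : Type*} [Field F] {V₀ : Type*} [AddCommGroup V₀] [Module F V₀]
    [FiniteDimensional F V₀] {ι : Type*} [Fintype ι] [DecidableEq ι] (v : ι → V₀) :
    Module.finrank F (LinearMap.range (LinearMap.pi fun i => Module.Dual.eval F V₀ (v i))) =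
      Module.finrank F (Submodule.span F (Set.range v)) := by
  set T : (ι → F) →ₗ[F] V₀ := Fintype.linearCombination F v with hT
  have hL : (LinearMap.pi fun i => Module.Dual.eval F V₀ (v i))
      = (LinearEquiv.piRing F F ι F).toLinearMap ∘ₗ T.dualMap := by
    ext φ i
    simp [hT, LinearMap.dualMap_apply, Fintype.linearCombination_apply_single]
  rw [hL, LinearMap.range_comp, LinearEquiv.finrank_map_eq,
    LinearMap.finrank_range_dualMap_eq_finrank_range, hT, Fintype.range_linearCombination]

theorem representable_is_entropic {F : Type*} [Field F] [Fintype F]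
    {E : Type*} [Fintype E]
    (r : Finset E → ℕ)
    (V : Type*) [AddCommGroup V] [Module F V] (f : E → V)
    (hrep : ∀ S : Finset E,
      r S = Module.finrank F (Submodule.span F (f '' (S : Set E)))) :
    ∃ μ : PMF (E → F), ∀ S : Finset E,
      (r S : ℝ) = shannonEntropy (Fintype.card F) (marg μ S) := by
  classical
  set V₀ : Submodule F V := Submodule.span F (Set.range f) with hV₀
  haveI : FiniteDimensional F V₀ := FiniteDimensional.span_of_finite F (Set.finite_range f)
  set g : E → V₀ := fun e => ⟨f e, Submodule.subset_span (Set.mem_range_self e)⟩ with hg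
  set D := Module.Dual F V₀ with hD
  haveI : Finite D := Module.finite_of_finite F
  haveI : Fintype D := Fintype.ofFinite D
  refine ⟨PMF.map (fun φ : D => fun e : E => φ (g e)) (PMF.uniformOfFintype D), fun S => ?_⟩
  have hmarg : marg (PMF.map (fun φ : D => fun e : E => φ (g e)) (PMF.uniformOfFintype D)) S
      = PMF.map ⇑(LinearMap.pi fun i : { i // i ∈ S } => Module.Dual.eval F V₀ (g i.1))
          (PMF.uniformOfFintype D) := by
    unfold marg
    rw [PMF.map_comp]
    rfl
  rw [hmarg, entropy_map_uniform, rank_eval]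
  congr 1
  rw [hrep S]
  have himg : Set.range (fun i : { i // i ∈ S } => g i.1) = g '' (S : Set E) := by
    ext x
    constructor
    · rintro ⟨i, rfl⟩; exact ⟨i.1, i.2, rfl⟩
    · rintro ⟨e, he, rfl⟩; exact ⟨⟨e, he⟩, rfl⟩
  rw [himg, ← Submodule.finrank_map_subtype_eq V₀ (Submodule.span F (g '' (S : Set E))),
    Submodule.map_span]
  have himg2 : (⇑V₀.subtype '' (g '' (S : Set E))) = f '' (S : Set E) := by
    rw [Set.image_image]
    rfl
  rw [himg2]
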